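/- Let n jobs have processing times a_i, b_i ∈ ℕ with 1 ≤ a_i ≤ b_i, and let d ∈ ℕ. Then the following are equivalent: (1) there exists a permutation schedule of all n jobs (some order σ of {1,…,n}) in which at most t jobs have second-machine completion time exceeding d; (2) there exists a subset T of jobs with |T| ≥ n − t such that the makespan of T, scheduled in SPT order, is at most d. In other words, the minimal number of tardy jobs achievable with common due date d equals n − max { |T| : C(T) ≤ d }. -/

import Mathlib

/-- One step of the two-machine flow shop recursion: the state `(A, D)` records
the completion time `A` on the first machine and `D` on the second machine;
processing a job `(a, b)` updates it to `(A + a, max D (A + a) + b)`,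
i.e. `D_k = max (D_{k-1}) (A_k) + b_k`. -/
def flowStep (s : ℕ × ℕ) (p : ℕ × ℕ) : ℕ × ℕ :=
  (s.1 + p.1, max s.2 (s.1 + p.1) + p.2)

/-- Second-machine completion time of the last job of a list of jobs processed
in list order (`0` for the empty list); the completion time of the `k`-th job
of `L` is `makespanD (L.take k)`. -/
def makespanD (L : List (ℕ × ℕ)) : ℕ := (L.foldl flowStep (0, 0)).2

/-- Two-machine flow shop makespan of a list of `m` jobs via the formula
`C_max = max_{1 ≤ k ≤ m} (∑_{i=1}^k a_i + ∑_{j=k}^m b_j)`. -/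
def makespanF (L : List (ℕ × ℕ)) : ℕ :=
  (Finset.range L.length).sup
    (fun k => ((L.take (k + 1)).map Prod.fst).sum + ((L.drop k).map Prod.snd).sum)

@[simp] def List.enumFrom {α : Type*} : ℕ → List α → List (ℕ × α)
  | _, [] => []
  | n, x :: xs => (n, x) :: List.enumFrom (n + 1) xs

abbrev List.enum {α : Type*} (l : List α) : List (ℕ × α) := List.enumFrom 0 l

lemma List.enumFrom_append' {α : Type*} : ∀ (n : ℕ) (xs ys : List α),
    List.enumFrom n (xs ++ ys) = List.enumFrom n xs ++ List.enumFrom (n + xs.length) ys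
  | n, [], ys => by simp
  | n, x :: xs, ys => by
      simp only [List.cons_append, List.enumFrom, List.length_cons, List.enumFrom_append' (n + 1)]
      rw [show n + 1 + xs.length = n + (xs.length + 1) by omega]

lemma List.enum_append {α : Type*} (xs ys : List α) :
    (xs ++ ys).enum = xs.enum ++ List.enumFrom xs.length ys := by
  simp [List.enum, List.enumFrom_append']

lemma List.fst_lt_add_of_mem_enumFrom {α : Type*} : ∀ {x : ℕ × α} {n : ℕ} {l : List α},
    x ∈ List.enumFrom n l → x.1 < n + l.length
  | x, n, [], h => by simp at h
  | x, n, y :: l, h => by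
      simp only [List.enumFrom, List.mem_cons] at h
      rcases h with rfl | h
      · simp
      · have := List.fst_lt_add_of_mem_enumFrom h
        simp only [List.length_cons]; omega

lemma List.enumFrom_map_snd' {α : Type*} : ∀ (n : ℕ) (l : List α),
    (List.enumFrom n l).map Prod.snd = l
  | n, [] => rfl
  | n, x :: l => by simp [List.enumFrom_map_snd' (n + 1) l]

lemma List.enum_map_snd {α : Type*} (l : List α) : l.enum.map Prod.snd = l :=
  List.enumFrom_map_snd' 0 l

lemma List.enumFrom_map' {α β : Type*} (f : α → β) : ∀ (n : ℕ) (l : List α),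
    List.enumFrom n (l.map f) = (List.enumFrom n l).map (Prod.map id f)
  | n, [] => rfl
  | n, x :: l => by simp [List.enumFrom_map' f (n + 1) l]

lemma List.enum_map {α β : Type*} (l : List α) (f : α → β) :
    (l.map f).enum = l.enum.map (Prod.map id f) :=
  List.enumFrom_map' f 0 l

lemma List.enumFrom_map_fst' {α : Type*} : ∀ (n : ℕ) (l : List α),
    (List.enumFrom n l).map Prod.fst = List.range' n l.length
  | n, [] => rfl
  | n, x :: l => by simp [List.enumFrom_map_fst' (n + 1) l, List.range'_succ]

lemma List.enum_map_fst {α : Type*} (l : List α) :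
    l.enum.map Prod.fst = List.range l.length := by
  rw [List.range_eq_range']; exact List.enumFrom_map_fst' 0 l

def msp : List (ℕ × ℕ) → ℕ
  | [] => 0
  | p :: L => p.1 + max (p.2 + (L.map Prod.snd).sum) (msp L)

lemma sB_le_msp : ∀ L : List (ℕ × ℕ), (L.map Prod.snd).sum ≤ msp L
  | [] => le_refl 0
  | p :: L => by simp only [msp, List.map_cons, List.sum_cons]; omega

lemma msp_sublist {L' L : List (ℕ × ℕ)} (h : L'.Sublist L) : msp L' ≤ msp L := by
  induction h with
  | slnil => exact le_refl 0
  | cons p h ih => simp only [msp]; omega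
  | cons_cons p h ih =>
      have hs : ((_ : List (ℕ×ℕ)).map Prod.snd).sum ≤ _ :=
        (h.map Prod.snd).sum_le_sum (fun x _ => Nat.zero_le x)
      simp only [msp]; omega

lemma foldl_flowStep : ∀ (L : List (ℕ × ℕ)) (A D : ℕ), A ≤ D →
    L.foldl flowStep (A, D) =
      (A + (L.map Prod.fst).sum, max (D + (L.map Prod.snd).sum) (A + msp L))
  | [], A, D, h => by
      simp only [List.foldl_nil, List.map_nil, List.sum_nil, msp]
      exact Prod.ext (by omega) (by omega)
  | p :: L, A, D, h => by
      rw [List.foldl_cons]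
      show List.foldl flowStep (A + p.1, max D (A + p.1) + p.2) L = _
      rw [foldl_flowStep L _ _ (by omega)]
      refine Prod.ext (by simp; omega) ?_
      simp only [msp, List.map_cons, List.sum_cons]
      omega

lemma makespanD_eq (L : List (ℕ × ℕ)) : makespanD L = msp L := by
  have := sB_le_msp L
  rw [makespanD, foldl_flowStep L 0 0 (le_refl 0)]
  simp; omega

lemma sup_range_succ (f : ℕ → ℕ) (n : ℕ) :
    (Finset.range (n+1)).sup f = max (f 0) ((Finset.range n).sup (fun k => f (k+1))) := by
  induction n with
  | zero => simp
  | succ n ih =>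
      rw [Finset.range_add_one, Finset.sup_insert, ih, Finset.range_add_one, Finset.sup_insert]
      simp [max_assoc, max_comm, max_left_comm]

lemma sup_range_add (c : ℕ) (g : ℕ → ℕ) (m : ℕ) (hm : 0 < m) :
    (Finset.range m).sup (fun k => c + g k) = c + (Finset.range m).sup g := by
  apply le_antisymm
  · exact Finset.sup_le fun k hk => Nat.add_le_add_left (Finset.le_sup hk) c
  · obtain ⟨i, hi, hieq⟩ := Finset.exists_mem_eq_sup (Finset.range m)
      ⟨0, Finset.mem_range.mpr hm⟩ g
    rw [hieq]; exact Finset.le_sup (f := fun k => c + g k) hi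

lemma makespanF_eq : ∀ L : List (ℕ × ℕ), makespanF L = msp L
  | [] => by simp [makespanF, msp]
  | p :: L => by
      have hL := makespanF_eq L
      rw [makespanF, List.length_cons, sup_range_succ]
      have h0 : ((((p :: L).take 1).map Prod.fst).sum + (((p :: L).drop 0).map Prod.snd).sum)
          = p.1 + (p.2 + (L.map Prod.snd).sum) := by simp
      have hsucc : ∀ k, (((p :: L).take (k + 1 + 1)).map Prod.fst).sum
            + (((p :: L).drop (k+1)).map Prod.snd).sum
          = p.1 + (((L.take (k + 1)).map Prod.fst).sum + ((L.drop k).map Prod.snd).sum) := by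
        intro k; simp [List.take_succ_cons]; omega
      rw [h0]
      rcases Nat.eq_zero_or_pos L.length with hz | hpos
      · rw [hz]
        have : L = [] := List.length_eq_zero_iff.mp hz
        subst this
        simp [msp]
      · have : ((Finset.range L.length).sup (fun k =>
            (((p :: L).take (k + 1 + 1)).map Prod.fst).sum
              + (((p :: L).drop (k+1)).map Prod.snd).sum))
            = p.1 + makespanF L := by
          rw [makespanF]
          calc _ = (Finset.range L.length).sup (fun k => p.1 +
                ((((L.take (k + 1)).map Prod.fst).sum + ((L.drop k).map Prod.snd).sum))) := by
                apply Finset.sup_congr rfl; intro k _; exact hsucc k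
            _ = _ := sup_range_add _ _ _ hpos
        rw [this, hL, msp]
        omega

def rPair : (ℕ × ℕ) → (ℕ × ℕ) → Prop := fun p q => p.1 ≤ q.1

instance : DecidableRel rPair := fun p q => inferInstanceAs (Decidable (p.1 ≤ q.1))

lemma msp_orderedInsert (x : ℕ × ℕ) :
    ∀ L : List (ℕ × ℕ), (∀ p ∈ L, p.1 ≤ p.2) →
      msp (List.orderedInsert rPair x L) ≤ msp (x :: L)
  | [], _ => le_refl _
  | y :: ys, hL => by
      rw [List.orderedInsert]
      split_ifs with hxy
      · exact le_refl _
      · have hyx : y.1 ≤ x.1 := le_of_not_ge hxy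
        have hy : y.1 ≤ y.2 := hL y (by simp)
        have ih := msp_orderedInsert x ys (fun p hp => hL p (by simp [hp]))
        have hperm : ((List.orderedInsert rPair x ys).map Prod.snd).sum
            = x.2 + (ys.map Prod.snd).sum := by
          have := ((List.perm_orderedInsert rPair x ys).map Prod.snd).sum_eq
          simpa using this
        simp only [msp, List.map_cons, List.sum_cons] at *
        omega

lemma msp_insertionSort :
    ∀ L : List (ℕ × ℕ), (∀ p ∈ L, p.1 ≤ p.2) →
      msp (List.insertionSort rPair L) ≤ msp L
  | [], _ => le_refl _
  | x :: L, hL => by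
      rw [List.insertionSort_cons]
      have hperm := List.perm_insertionSort rPair L
      have hmem : ∀ p ∈ List.insertionSort rPair L, p.1 ≤ p.2 := fun p hp =>
        hL p (by simp [hperm.mem_iff.mp hp])
      refine le_trans (msp_orderedInsert x _ hmem) ?_
      have hsum : ((List.insertionSort rPair L).map Prod.snd).sum = (L.map Prod.snd).sum :=
        (hperm.map Prod.snd).sum_eq
      have ih := msp_insertionSort L (fun p hp => hL p (by simp [hp]))
      simp only [msp]
      omega

lemma msp_ontime (d : ℕ) (L : List (ℕ × ℕ)) :
    msp ((L.enum.filter (fun p => decide (msp (L.take (p.1 + 1)) ≤ d))).map Prod.snd) ≤ d := by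
  induction L using List.reverseRecOn with
  | nil => simp [msp]
  | append_singleton M x ih =>
      rw [List.enum_append]
      have henum1 : List.enumFrom M.length [x] = [(M.length, x)] := by simp
      rw [henum1, List.filter_append]
      have hpred : ∀ p ∈ M.enum,
          (decide (msp ((M ++ [x]).take (p.1 + 1)) ≤ d))
            = (decide (msp (M.take (p.1 + 1)) ≤ d)) := by
        intro p hp
        have hlt : p.1 < M.length := by
          have := List.fst_lt_add_of_mem_enumFrom (by simpa using hp)
          simpa using this
        rw [List.take_append_of_le_length (by omega)]
      rw [List.filter_congr hpred]
      by_cases hx : msp (M ++ [x]) ≤ d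
      · have hxfull : (M ++ [x]).take (M.length + 1) = M ++ [x] := by
          rw [List.take_of_length_le (by simp)]
        rw [List.filter_singleton]
        simp only [hxfull, hx, decide_true]
        rw [List.map_append]
        refine le_trans (msp_sublist ?_) hx
        have h1 : ((M.enum.filter (fun p => decide (msp (M.take (p.1 + 1)) ≤ d))).map
            Prod.snd).Sublist M := by
          have := (List.filter_sublist (p := fun p => decide (msp (M.take (p.1 + 1)) ≤ d))
            (l := M.enum)).map Prod.snd
          rwa [List.enum_map_snd] at this
        simpa using h1.append_right [x]
      · have hxfull : (M ++ [x]).take (M.length + 1) = M ++ [x] := by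
          rw [List.take_of_length_le (by simp)]
        rw [List.filter_singleton]
        simp only [hxfull, hx, decide_false]
        simpa using ih

lemma length_filter_range (p : ℕ → Prop) [DecidablePred p] (n : ℕ) :
    ((List.range n).filter (fun k => decide (p k))).length
      = ((Finset.univ : Finset (Fin n)).filter (fun k => p k.val)).card := by
  have hnd : ((List.range n).filter (fun k => decide (p k))).Nodup :=
    List.filter_sublist.nodup List.nodup_range
  rw [← List.toFinset_card_of_nodup hnd]
  symm
  apply Finset.card_bij (fun (k : Fin n) _ => k.val)
  · intro k hk
    simp only [Finset.mem_filter, Finset.mem_univ, true_and] at hk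
    simp [List.mem_filter, List.mem_range, k.isLt, hk]
  · intro k _ k' _ h; exact Fin.ext h
  · intro m hm
    simp only [List.mem_toFinset, List.mem_filter, List.mem_range, decide_eq_true_eq] at hm
    exact ⟨⟨m, hm.1⟩, by simp [hm.2], rfl⟩

lemma card_filter_le_val (n m : ℕ) (h : m ≤ n) :
    ((Finset.univ : Finset (Fin n)).filter (fun k => m ≤ k.val)).card = n - m := by
  have h2 : ((Finset.univ : Finset (Fin n)).filter (fun k => k.val < m)).card = m := by
    have : (Finset.univ.filter (fun k : Fin n => k.val < m))
        = Finset.map (Fin.castLEEmb h) Finset.univ := by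
      ext k
      simp only [Finset.mem_filter, Finset.mem_univ, true_and, Finset.mem_map,
        Fin.castLEEmb, Function.Embedding.coeFn_mk]
      constructor
      · intro hk; exact ⟨⟨k.val, hk⟩, Fin.ext rfl⟩
      · rintro ⟨i, rfl⟩; simpa using i.isLt
    rw [this]; simp
  have h3 := Finset.card_filter_add_card_filter_not
    (s := (Finset.univ : Finset (Fin n))) (p := fun k : Fin n => k.val < m)
  simp only [not_lt, Finset.card_univ, Fintype.card_fin] at h3
  omega

/-- For jobs with `1 ≤ a i ≤ b i` and a common due date `d`,
the following are equivalent: (1) some permutation schedule of all `n` jobs has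
at most `t` jobs whose second-machine completion time exceeds `d`; (2) there is
a set of at least `n - t` jobs which, listed in nondecreasing order of their
`a`-values (SPT order), has makespan at most `d`.  Hence the minimal number of
tardy jobs for due date `d` is `n - max {|T| : C(T) ≤ d}`. -/
theorem tardy_jobs_iff_subset (n : ℕ) (a b : Fin n → ℕ)
    (ha1 : ∀ i, 1 ≤ a i) (hab : ∀ i, a i ≤ b i) (d t : ℕ) :
    (∃ σ : Equiv.Perm (Fin n),
      ((Finset.univ : Finset (Fin n)).filter (fun k : Fin n =>
        d < makespanD ((List.ofFn (fun i => (a (σ i), b (σ i)))).take ((k : ℕ) + 1)))).card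
        ≤ t)
    ↔ (∃ (m : ℕ) (g : Fin m → Fin n), Function.Injective g ∧
        (∀ i j : Fin m, i ≤ j → a (g i) ≤ a (g j)) ∧
        n - t ≤ m ∧
        makespanF (List.ofFn (fun i => (a (g i), b (g i)))) ≤ d) := by
  have job : Fin n → ℕ × ℕ := fun i => (a i, b i)
  constructor
  · rintro ⟨σ, hcard⟩
    set I : List (Fin n) := List.ofFn σ with hI
    have hofn : List.ofFn (fun i => (a (σ i), b (σ i))) = I.map (fun i => (a i, b i)) := by
      rw [hI, List.map_ofFn]; rfl
    rw [hofn] at hcard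
    set L : List (ℕ × ℕ) := I.map (fun i => (a i, b i)) with hLdef
    set J : List (Fin n) :=
      (I.enum.filter (fun p => decide (msp (L.take (p.1 + 1)) ≤ d))).map Prod.snd with hJ
    have hmapJ : (L.enum.filter (fun p => decide (msp (L.take (p.1 + 1)) ≤ d))).map Prod.snd
        = J.map (fun i => (a i, b i)) := by
      rw [hLdef, List.enum_map, List.filter_map, List.map_map, hJ, List.map_map]
      rfl
    have ha : msp (J.map (fun i => (a i, b i))) ≤ d := hmapJ ▸ msp_ontime d L
    have hInodup : I.Nodup := by rw [hI]; exact List.nodup_ofFn.mpr σ.injective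
    have hJsub : J.Sublist I := by
      have := (List.filter_sublist
        (p := fun p => decide (msp (L.take (p.1 + 1)) ≤ d)) (l := I.enum)).map Prod.snd
      rwa [List.enum_map_snd] at this
    have hJnodup : J.Nodup := hJsub.nodup hInodup
    have hlenI : I.length = n := by simp [hI]
    have hJlen : J.length
        = ((Finset.univ : Finset (Fin n)).filter
            (fun k : Fin n => msp (L.take ((k : ℕ) + 1)) ≤ d)).card := by
      rw [hJ, List.length_map]
      have h1 : (I.enum.filter (fun p => decide (msp (L.take (p.1 + 1)) ≤ d))).length
          = ((I.enum.map Prod.fst).filter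
              (fun k => decide (msp (L.take (k + 1)) ≤ d))).length := by
        rw [List.filter_map, List.length_map]; rfl
      rw [h1, List.enum_map_fst, hlenI, length_filter_range]
    have hcompl := Finset.card_filter_add_card_filter_not
      (s := (Finset.univ : Finset (Fin n)))
      (p := fun k : Fin n => msp (L.take ((k : ℕ) + 1)) ≤ d)
    simp only [not_le, Finset.card_univ, Fintype.card_fin] at hcompl
    simp only [makespanD_eq] at hcard
    have hJlen2 : n - t ≤ J.length := by omega
    -- sort J
    letI rdec : DecidableRel (fun i j : Fin n => a i ≤ a j) := fun i j => Nat.decLe _ _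
    letI : IsTotal (Fin n) (fun i j : Fin n => a i ≤ a j) := ⟨fun i j => le_total _ _⟩
    letI : IsTrans (Fin n) (fun i j : Fin n => a i ≤ a j) := ⟨fun i j k h1 h2 => le_trans h1 h2⟩
    set J' := List.insertionSort (fun i j : Fin n => a i ≤ a j) J with hJ'
    have hJ'perm : J'.Perm J := List.perm_insertionSort _ J
    have hsorted : List.Pairwise (fun i j : Fin n => a i ≤ a j) J' :=
      List.pairwise_insertionSort _ J
    refine ⟨J'.length, fun i => J'.get i, ?_, ?_, ?_, ?_⟩
    · exact List.nodup_iff_injective_get.mp (hJ'perm.nodup_iff.mpr hJnodup)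
    · intro i j hij
      rcases eq_or_lt_of_le hij with h | h
      · rw [h]
      · exact hsorted.rel_get_of_lt h
    · rw [hJ'perm.length_eq]; exact hJlen2
    · have hofn2 : List.ofFn (fun i => (a (J'.get i), b (J'.get i)))
          = J'.map (fun i => (a i, b i)) := by
        conv_rhs => rw [← List.ofFn_get J', List.map_ofFn]
        rfl
      rw [hofn2, makespanF_eq]
      have hmapsort : J'.map (fun i => (a i, b i))
          = List.insertionSort rPair (J.map (fun i => (a i, b i))) :=
        List.map_insertionSort _ rPair _ J (fun x _ y _ => Iff.rfl)
      rw [hmapsort]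
      refine le_trans (msp_insertionSort _ ?_) ha
      intro p hp
      simp only [List.mem_map] at hp
      obtain ⟨i, _, rfl⟩ := hp
      exact hab i
  · rintro ⟨m, g, hginj, hmono, hm, hms⟩
    have hmn : m ≤ n := by
      have := Fintype.card_le_of_injective g hginj; simpa using this
    set Jl : List (Fin n) := List.ofFn g with hJl
    set rest : List (Fin n) := (List.finRange n).filter (fun i => decide (i ∉ Jl)) with hrest
    set s : List (Fin n) := Jl ++ rest with hs
    have hJlnodup : Jl.Nodup := List.nodup_ofFn.mpr hginj
    have hsnodup : s.Nodup := by
      apply hJlnodup.append ((List.nodup_finRange n).filter _)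
      intro x hx hx2
      simp only [List.mem_filter, decide_eq_true_eq] at hx2
      exact hx2.2 hx
    have hperm : s.Perm (List.finRange n) := by
      rw [List.perm_ext_iff_of_nodup hsnodup (List.nodup_finRange n)]
      intro i
      simp only [List.mem_finRange, iff_true]
      by_cases hmem : i ∈ Jl
      · exact List.mem_append_left _ hmem
      · refine List.mem_append_right _ ?_
        rw [hrest, List.mem_filter]
        simp [hmem]
    have hslen : s.length = n := by rw [hperm.length_eq, List.length_finRange]
    have hinj : Function.Injective (fun i : Fin n => s.get (Fin.cast hslen.symm i)) := by
      intro i j hij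
      have h2 := List.nodup_iff_injective_get.mp hsnodup hij
      exact Fin.ext (by simpa using congrArg Fin.val h2)
    refine ⟨Equiv.ofBijective _ (Finite.injective_iff_bijective.mp hinj), ?_⟩
    have hsof : List.ofFn (fun i : Fin n => s.get (Fin.cast hslen.symm i)) = s := by
      apply List.ext_get (by simp [hslen])
      intro i h1 h2
      rw [List.get_ofFn]
      exact congrArg s.get (Fin.ext rfl)
    have hofn : (List.ofFn (fun i =>
        (a ((Equiv.ofBijective _ (Finite.injective_iff_bijective.mp hinj)) i),
         b ((Equiv.ofBijective _ (Finite.injective_iff_bijective.mp hinj)) i))))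
        = s.map (fun i => (a i, b i)) := by
      conv_rhs => rw [← hsof]
      rw [List.map_ofFn]
      rfl
    rw [hofn]
    have hsubset : (Finset.univ.filter (fun k : Fin n =>
        d < makespanD ((s.map (fun i => (a i, b i))).take ((k : ℕ) + 1))))
        ⊆ Finset.univ.filter (fun k : Fin n => m ≤ k.val) := by
      intro k hk
      simp only [Finset.mem_filter, Finset.mem_univ, true_and] at hk ⊢
      by_contra h'
      push_neg at h'
      apply absurd hk
      push_neg
      rw [makespanD_eq]
      have h1 : (s.map (fun i => (a i, b i))).take ((k : ℕ) + 1)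
          = ((List.ofFn g).map (fun i => (a i, b i))).take ((k : ℕ) + 1) := by
        rw [← List.map_take, ← List.map_take, hs,
          List.take_append_of_le_length (by simp [hJl]; omega)]
      rw [h1, List.map_ofFn]
      have h2 : msp (List.ofFn ((fun i => (a i, b i)) ∘ g)) ≤ d := by
        rw [← makespanF_eq]; exact hms
      exact le_trans (msp_sublist (List.take_sublist _ _)) h2
    refine le_trans (Finset.card_le_card hsubset) ?_
    rw [card_filter_le_val n m hmn]
    omega
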